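/- arXiv:0911.1724 — 5 statements merged into one kernel-verified Lean document; each statement's English description precedes it below -/
import Mathlib

section
/- Let H be a self-adjoint operator on a finite-dimensional complex inner product space of dimension D, with D pairwise distinct eigenvalues E₁,…,E_D and corresponding orthonormal eigenbasis φ₁,…,φ_D, and let P be an orthogonal projection. Let η, δ' ∈ (0,1). If ⟨φ_α, P φ_α⟩ ≥ 1 − ηδ' for every α, then for every unit vector ψ₀, liminf_{T→∞} (1/T)·Leb{t ∈ (0,T) : ⟨e^{−iHt} ψ₀, P e^{−iHt} ψ₀⟩ > 1 − η} ≥ 1 − δ', where Leb denotes Lebesgue measure. -/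
open MeasureTheory Filter Complex
open scoped InnerProductSpace
open NormedSpace in
lemma exp_apply_eigen {V : Type*} [NormedAddCommGroup V] [NormedSpace ℂ V] [CompleteSpace V]
    (A : V →L[ℂ] V) (x : V) (c : ℂ) (h : A x = c • x) :
    NormedSpace.exp A x = Complex.exp c • x := by
  have hpow : ∀ n : ℕ, (A ^ n) x = c ^ n • x := by
    intro n
    induction n with
    | zero => simp
    | succ n ih =>
      rw [pow_succ, pow_succ, ContinuousLinearMap.mul_apply, h, _root_.map_smul, ih, smul_smul,
        mul_comm]
  have hsum : Summable fun n : ℕ => ((n.factorial : ℂ)⁻¹) • A ^ n := expSeries_summable' (𝕂 := ℂ) A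
  have h1 : NormedSpace.exp A x = ∑' n : ℕ, (((n.factorial : ℂ)⁻¹) • A ^ n) x := by
    rw [NormedSpace.exp_eq_tsum (𝕂 := ℂ)]
    exact ((ContinuousLinearMap.apply ℂ V x).map_tsum hsum)
  rw [h1]
  have h2 : ∀ n : ℕ, (((n.factorial : ℂ)⁻¹) • A ^ n) x = ((c ^ n / n.factorial) : ℂ) • x := by
    intro n
    rw [ContinuousLinearMap.smul_apply, hpow, smul_smul, div_eq_inv_mul]
  simp_rw [h2]
  rw [Summable.tsum_smul_const (NormedSpace.expSeries_div_summable c)]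
  congr 1
  rw [Complex.exp_eq_exp_ℂ]
  exact (congrFun (NormedSpace.exp_eq_tsum_div) c).symm


lemma avg_cexp (w : ℝ) :
    Tendsto (fun T : ℝ => (∫ t in (0:ℝ)..T, Complex.exp (Complex.I * w * t)) / (T : ℂ)) atTop
      (nhds (if w = 0 then 1 else 0)) := by
  by_cases hw : w = 0
  · simp only [hw, if_pos rfl]
    have hev : ∀ᶠ T : ℝ in atTop,
        (1:ℂ) = (∫ t in (0:ℝ)..T, Complex.exp (Complex.I * (0:ℝ) * t)) / (T : ℂ) := by
      filter_upwards [eventually_gt_atTop (0:ℝ)] with T hT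
      simp only [Complex.ofReal_zero, mul_zero, zero_mul, Complex.exp_zero]
      rw [intervalIntegral.integral_const]
      simp only [sub_zero, real_smul, mul_one]
      rw [div_self]
      exact_mod_cast ne_of_gt hT
    exact tendsto_const_nhds.congr' hev
  · simp only [if_neg hw]
    have hc : Complex.I * w ≠ 0 := by
      simp [Complex.I_ne_zero, Complex.ofReal_eq_zero, hw]
    have hval : ∀ T : ℝ, (∫ t in (0:ℝ)..T, Complex.exp (Complex.I * w * t))
        = (Complex.exp (Complex.I * w * T) - 1) / (Complex.I * w) := by
      intro T
      have : ∀ t : ℝ, Complex.I * w * t = (Complex.I * w) * t := fun t => by ring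
      rw [integral_exp_mul_complex hc]
      simp
    apply squeeze_zero_norm' (a := fun T : ℝ => (2 / ‖Complex.I * (w:ℂ)‖) / T)
    · filter_upwards [eventually_gt_atTop (0:ℝ)] with T hT
      rw [hval, norm_div, norm_div, Complex.norm_real]
      rw [Real.norm_of_nonneg hT.le]
      gcongr
      calc ‖Complex.exp (Complex.I * w * T) - 1‖
          ≤ ‖Complex.exp (Complex.I * w * T)‖ + ‖(1:ℂ)‖ := norm_sub_le _ _
        _ ≤ 2 := by
            rw [Complex.norm_exp]
            have : (Complex.I * w * T).re = 0 := by simp [Complex.mul_re]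
            rw [this, Real.exp_zero]
            norm_num
    · exact tendsto_const_nhds.div_atTop tendsto_id


lemma liminf_aux (f g : ℝ → ℝ) (η δ' L : ℝ) (hη0 : 0 < η)
    (hgc : Continuous g) (hg0 : ∀ t, 0 ≤ g t) (hfg : ∀ t, g t = 1 - f t)
    (hA : Tendsto (fun T : ℝ => (∫ t in Set.Ioo (0:ℝ) T, g t) / T) atTop (nhds L))
    (hL : L ≤ η * δ') :
    (1 - δ') ≤ liminf (fun T : ℝ =>
      (volume {t ∈ Set.Ioo (0:ℝ) T | f t > 1 - η}).toReal / T) atTop := by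
  set B : Set ℝ := {t : ℝ | η ≤ g t} with hB
  have hBm : MeasurableSet B := (isClosed_le continuous_const hgc).measurableSet
  have hSet : ∀ T : ℝ, {t ∈ Set.Ioo (0:ℝ) T | f t > 1 - η} = Set.Ioo 0 T \ B := by
    intro T; ext t
    simp only [Set.mem_sep_iff, Set.mem_diff, hB, Set.mem_setOf_eq, gt_iff_lt, not_le, hfg t]
    constructor <;> rintro ⟨h1, h2⟩ <;> exact ⟨h1, by linarith⟩
  have hint : ∀ T : ℝ, IntegrableOn g (Set.Ioo 0 T) :=
    fun T => (hgc.integrableOn_Icc).mono_set Set.Ioo_subset_Icc_self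
  have key : ∀ T : ℝ, 0 < T →
      1 - ((∫ t in Set.Ioo (0:ℝ) T, g t) / T) / η ≤
        (volume {t ∈ Set.Ioo (0:ℝ) T | f t > 1 - η}).toReal / T := by
    intro T hT
    have hioo : volume (Set.Ioo (0:ℝ) T) = ENNReal.ofReal T := by
      rw [Real.volume_Ioo, sub_zero]
    have hle : volume (Set.Ioo 0 T ∩ B) ≤ ENNReal.ofReal T := by
      rw [← hioo]; exact measure_mono Set.inter_subset_left
    have hfin : volume (Set.Ioo 0 T ∩ B) ≠ ⊤ :=
      ne_top_of_le_ne_top ENNReal.ofReal_ne_top hle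
    have hmeas : volume (Set.Ioo 0 T \ B)
        = volume (Set.Ioo (0:ℝ) T) - volume (Set.Ioo 0 T ∩ B) := by
      rw [show Set.Ioo (0:ℝ) T \ B = Set.Ioo 0 T \ (Set.Ioo 0 T ∩ B) by
        rw [Set.diff_self_inter]]
      exact measure_diff Set.inter_subset_left
        ((measurableSet_Ioo.inter hBm).nullMeasurableSet) hfin
    have hmark := mul_meas_ge_le_integral_of_nonneg (μ := volume.restrict (Set.Ioo 0 T))
      (ae_of_all _ hg0) (hint T) η
    rw [measureReal_def, Measure.restrict_apply hBm, Set.inter_comm] at hmark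
    set m : ℝ := (volume (Set.Ioo 0 T ∩ B)).toReal with hm
    set I : ℝ := ∫ t in Set.Ioo (0:ℝ) T, g t with hI
    have htr : (volume {t ∈ Set.Ioo (0:ℝ) T | f t > 1 - η}).toReal = T - m := by
      rw [hSet T, hmeas, hioo, ENNReal.toReal_sub_of_le hle ENNReal.ofReal_ne_top,
        ENNReal.toReal_ofReal hT.le]
    rw [htr]
    have hmle : m ≤ I / η := by
      rw [le_div_iff₀ hη0]; linarith
    have h1 : m / T ≤ (I / η) / T := by gcongr
    have h2 : (I / η) / T = (I / T) / η := div_right_comm I η T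
    have h3 : (T - m) / T = 1 - m / T := by
      rw [sub_div, div_self hT.ne']
    rw [h3]
    linarith [h1, h2.le]
  have hev : ∀ᶠ T : ℝ in atTop,
      1 - ((∫ t in Set.Ioo (0:ℝ) T, g t) / T) / η ≤
        (volume {t ∈ Set.Ioo (0:ℝ) T | f t > 1 - η}).toReal / T := by
    filter_upwards [eventually_gt_atTop (0:ℝ)] with T hT using key T hT
  have hs : Tendsto (fun T : ℝ => 1 - ((∫ t in Set.Ioo (0:ℝ) T, g t) / T) / η) atTop
      (nhds (1 - L / η)) := tendsto_const_nhds.sub (hA.div_const η)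
  have h1 := hs.liminf_eq
  have h2 : liminf (fun T : ℝ => 1 - ((∫ t in Set.Ioo (0:ℝ) T, g t) / T) / η) atTop ≤
      liminf (fun T : ℝ =>
        (volume {t ∈ Set.Ioo (0:ℝ) T | f t > 1 - η}).toReal / T) atTop := by
    have hub : ∀ᶠ T : ℝ in atTop,
        (volume {t ∈ Set.Ioo (0:ℝ) T | f t > 1 - η}).toReal / T ≤ 1 := by
      filter_upwards [eventually_gt_atTop (0:ℝ)] with T hT
      rw [div_le_one hT]
      calc (volume {t ∈ Set.Ioo (0:ℝ) T | f t > 1 - η}).toReal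
          ≤ (volume (Set.Ioo (0:ℝ) T)).toReal := by
            refine ENNReal.toReal_mono ?_ (measure_mono fun t ht => ht.1)
            rw [Real.volume_Ioo]; exact ENNReal.ofReal_ne_top
        _ = T := by rw [Real.volume_Ioo, sub_zero, ENNReal.toReal_ofReal hT.le]
    exact liminf_le_liminf hev (hs.isBoundedUnder_ge)
      (isCoboundedUnder_ge_of_eventually_le atTop hub)
  have h3 : L / η ≤ δ' := by rw [div_le_iff₀ hη0]; linarith
  linarith [h1 ▸ h2]

/-- let `H` be a self-adjoint operator on a `D`-dimensional complex inner
product space with pairwise distinct eigenvalues and orthonormal eigenbasis `φ₁,…,φ_D`,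
and let `P` be an orthogonal projection. If `⟨φ_α, P φ_α⟩ ≥ 1 − ηδ'` for every `α`, then
every unit vector `ψ₀` satisfies
`liminf_{T→∞} (1/T)·Leb{t ∈ (0,T) : ⟨e^{−iHt}ψ₀, P e^{−iHt}ψ₀⟩ > 1 − η} ≥ 1 − δ'`. -/
theorem stmt2 {V : Type*} [NormedAddCommGroup V] [InnerProductSpace ℂ V]
    [FiniteDimensional ℂ V]
    (D : ℕ) (hD : 0 < D) (hdim : Module.finrank ℂ V = D)
    (H P : V →L[ℂ] V)
    (hH : IsSelfAdjoint H)
    (hP : IsSelfAdjoint P) (hP2 : P ∘L P = P)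
    (E : Fin D → ℝ) (hE : Function.Injective E)
    (φ : Fin D → V) (hON : Orthonormal ℂ φ)
    (heig : ∀ α, H (φ α) = (E α : ℂ) • φ α)
    (η δ' : ℝ) (hη : η ∈ Set.Ioo (0:ℝ) 1) (hδ' : δ' ∈ Set.Ioo (0:ℝ) 1)
    (hgood : ∀ α, 1 - η * δ' ≤ (⟪φ α, P (φ α)⟫_ℂ).re)
    (ψ₀ : V) (hψ₀ : ‖ψ₀‖ = 1) :
    (1 - δ' : ℝ) ≤
      liminf (fun T : ℝ =>
        (volume {t ∈ Set.Ioo (0:ℝ) T |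
          (⟪NormedSpace.exp ((-(Complex.I * t)) • H) ψ₀,
            P (NormedSpace.exp ((-(Complex.I * t)) • H) ψ₀)⟫_ℂ).re > 1 - η}).toReal / T)
        atTop := by
  obtain ⟨hη0, hη1⟩ := hη
  obtain ⟨hδ0, hδ1⟩ := hδ'
  have hne : Nonempty (Fin D) := Fin.pos_iff_nonempty.mp hD
  have hsp : ⊤ ≤ Submodule.span ℂ (Set.range φ) :=
    (hON.linearIndependent.span_eq_top_of_card_eq_finrank (by simp [hdim])).ge
  set b : OrthonormalBasis (Fin D) ℂ V := OrthonormalBasis.mk hON hsp with hb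
  set c : Fin D → ℂ := fun α => ⟪φ α, ψ₀⟫_ℂ with hc
  have hrepr : ∑ α, c α • φ α = ψ₀ := by
    have h := b.sum_repr' ψ₀
    simpa [hb, hc, OrthonormalBasis.coe_mk] using h
  have hexp : ∀ t : ℝ, NormedSpace.exp ((-(Complex.I * t)) • H) ψ₀
      = ∑ α, (c α * Complex.exp (-(Complex.I * E α * t))) • φ α := by
    intro t
    conv_lhs => rw [← hrepr]
    rw [map_sum]
    refine Finset.sum_congr rfl fun α _ => ?_
    have heig' : ((-(Complex.I * t)) • H) (φ α) = (-(Complex.I * E α * t)) • φ α := by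
      rw [ContinuousLinearMap.smul_apply, heig α, smul_smul]
      congr 1
      ring
    rw [_root_.map_smul, exp_apply_eigen _ _ _ heig', smul_smul]
  -- inner product expansion
  have hinner : ∀ (Q : V →L[ℂ] V) (t : ℝ),
      ⟪NormedSpace.exp ((-(Complex.I * t)) • H) ψ₀,
        Q (NormedSpace.exp ((-(Complex.I * t)) • H) ψ₀)⟫_ℂ
      = ∑ α, ∑ β, ((starRingEnd ℂ) (c α) * c β * ⟪φ α, Q (φ β)⟫_ℂ)
          * Complex.exp (Complex.I * ((E α - E β : ℝ)) * t) := by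
    intro Q t
    rw [hexp t, map_sum, sum_inner]
    refine Finset.sum_congr rfl fun α _ => ?_
    rw [inner_sum]
    refine Finset.sum_congr rfl fun β _ => ?_
    rw [_root_.map_smul, inner_smul_left, inner_smul_right]
    have hc1 : (starRingEnd ℂ) (c α * Complex.exp (-(Complex.I * E α * t)))
        = (starRingEnd ℂ) (c α) * Complex.exp (Complex.I * E α * t) := by
      rw [map_mul, ← Complex.exp_conj]
      congr 1
      simp only [map_neg, map_mul, Complex.conj_I, Complex.conj_ofReal]
      ring
    rw [hc1]
    have hee : Complex.exp (Complex.I * E α * t) * Complex.exp (-(Complex.I * E β * t))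
        = Complex.exp (Complex.I * ((E α - E β : ℝ)) * t) := by
      rw [← Complex.exp_add]
      congr 1
      push_cast
      ring
    rw [← hee]
    ring
  have hONite : ∀ α β, ⟪φ α, φ β⟫_ℂ = if α = β then 1 else 0 :=
    fun α β => orthonormal_iff_ite.mp hON α β
  -- constancy of the norm
  have hip : ∀ t : ℝ, ⟪NormedSpace.exp ((-(Complex.I * t)) • H) ψ₀,
      NormedSpace.exp ((-(Complex.I * t)) • H) ψ₀⟫_ℂ = ∑ α, (starRingEnd ℂ) (c α) * c α := by
    intro t
    have h := hinner (ContinuousLinearMap.id ℂ V) t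
    simp only [ContinuousLinearMap.id_apply] at h
    rw [h]
    refine Finset.sum_congr rfl fun α _ => ?_
    rw [Finset.sum_eq_single α]
    · rw [hONite α α, if_pos rfl, sub_self]
      simp
    · intro β _ hβ
      rw [hONite α β, if_neg (Ne.symm hβ)]
      ring
    · intro h; exact absurd (Finset.mem_univ α) h
  have h0 : NormedSpace.exp ((-(Complex.I * ((0:ℝ):ℂ))) • H) ψ₀ = ψ₀ := by
    norm_num [NormedSpace.exp_zero]
  have hnormsum : ∑ α, (starRingEnd ℂ) (c α) * c α = 1 := by
    have h := (hip 0).symm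
    rw [h0] at h
    rw [h, inner_self_eq_norm_sq_to_K, hψ₀]
    norm_num
  -- the complement projection
  set Q : V →L[ℂ] V := 1 - P with hQ
  have hQapp : ∀ x : V, Q x = x - P x := fun x => by
    rw [hQ, ContinuousLinearMap.sub_apply, ContinuousLinearMap.one_apply]
  have hPP : ∀ x : V, P (P x) = P x := fun x => by
    conv_rhs => rw [← hP2]
    rfl
  have hQsa : IsSelfAdjoint Q := by
    rw [hQ]; exact (IsSelfAdjoint.one (V →L[ℂ] V)).sub hP
  have hQsym := hQsa.isSymmetric
  have hg0x : ∀ x : V, 0 ≤ (⟪x, Q x⟫_ℂ).re := by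
    intro x
    have hQQ : Q (Q x) = Q x := by
      rw [hQapp (Q x), hQapp x, map_sub, hPP]
      simp
    have h : ⟪x, Q x⟫_ℂ = ⟪Q x, Q x⟫_ℂ := by
      conv_lhs => rw [← hQQ]
      exact (hQsym x (Q x)).symm
    rw [h]
    exact inner_self_nonneg (𝕜 := ℂ) (x := Q x)
  -- the key real function and its properties
  have hfg : ∀ t : ℝ,
      (⟪NormedSpace.exp ((-(Complex.I * t)) • H) ψ₀,
        Q (NormedSpace.exp ((-(Complex.I * t)) • H) ψ₀)⟫_ℂ).re
      = 1 - (⟪NormedSpace.exp ((-(Complex.I * t)) • H) ψ₀,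
        P (NormedSpace.exp ((-(Complex.I * t)) • H) ψ₀)⟫_ℂ).re := by
    intro t
    rw [hQapp, inner_sub_right, hip t, hnormsum, Complex.sub_re, Complex.one_re]
  have hFc : Continuous (fun t : ℝ => ⟪NormedSpace.exp ((-(Complex.I * t)) • H) ψ₀,
      Q (NormedSpace.exp ((-(Complex.I * t)) • H) ψ₀)⟫_ℂ) := by
    have hfun : (fun t : ℝ => ⟪NormedSpace.exp ((-(Complex.I * t)) • H) ψ₀,
        Q (NormedSpace.exp ((-(Complex.I * t)) • H) ψ₀)⟫_ℂ)
        = fun t : ℝ => ∑ α, ∑ β, ((starRingEnd ℂ) (c α) * c β * ⟪φ α, Q (φ β)⟫_ℂ)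
          * Complex.exp (Complex.I * ((E α - E β : ℝ)) * t) := funext (hinner Q)
    rw [hfun]
    refine continuous_finset_sum _ fun α _ => continuous_finset_sum _ fun β _ => ?_
    exact continuous_const.mul (Complex.continuous_exp.comp
      (continuous_const.mul Complex.continuous_ofReal))
  have hgc : Continuous (fun t : ℝ => (⟪NormedSpace.exp ((-(Complex.I * t)) • H) ψ₀,
      Q (NormedSpace.exp ((-(Complex.I * t)) • H) ψ₀)⟫_ℂ).re) :=
    Complex.continuous_re.comp hFc
  -- coefficients of the double sum
  set K : Fin D × Fin D → ℂ :=
    fun p => (starRingEnd ℂ) (c p.1) * c p.2 * ⟪φ p.1, Q (φ p.2)⟫_ℂ with hK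
  have hFsum : ∀ t : ℝ, ⟪NormedSpace.exp ((-(Complex.I * t)) • H) ψ₀,
      Q (NormedSpace.exp ((-(Complex.I * t)) • H) ψ₀)⟫_ℂ
      = ∑ p : Fin D × Fin D, K p * Complex.exp (Complex.I * ((E p.1 - E p.2 : ℝ)) * t) := by
    intro t
    rw [hinner Q t, Fintype.sum_prod_type]
  have hcontexp : ∀ p : Fin D × Fin D,
      Continuous fun t : ℝ => Complex.exp (Complex.I * ((E p.1 - E p.2 : ℝ)) * t) :=
    fun p => Complex.continuous_exp.comp (continuous_const.mul Complex.continuous_ofReal)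
  have hIntEq : ∀ T : ℝ, (∫ t in (0:ℝ)..T, ⟪NormedSpace.exp ((-(Complex.I * t)) • H) ψ₀,
      Q (NormedSpace.exp ((-(Complex.I * t)) • H) ψ₀)⟫_ℂ)
      = ∑ p : Fin D × Fin D,
          K p * ∫ t in (0:ℝ)..T, Complex.exp (Complex.I * ((E p.1 - E p.2 : ℝ)) * t) := by
    intro T
    rw [intervalIntegral.integral_congr (g := fun t => ∑ p : Fin D × Fin D,
        K p * Complex.exp (Complex.I * ((E p.1 - E p.2 : ℝ)) * t))
        (fun t _ => hFsum t)]
    rw [intervalIntegral.integral_finset_sum (f := fun p t =>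
        K p * Complex.exp (Complex.I * ((E p.1 - E p.2 : ℝ)) * t))
      (fun p _ => ((continuous_const.mul (hcontexp p)).intervalIntegrable 0 T))]
    exact Finset.sum_congr rfl fun p _ => intervalIntegral.integral_const_mul _ _
  have hval : (∑ p : Fin D × Fin D, K p * (if (E p.1 - E p.2) = 0 then (1:ℂ) else 0))
      = ∑ α, K (α, α) := by
    rw [Fintype.sum_prod_type]
    refine Finset.sum_congr rfl fun α _ => ?_
    rw [Finset.sum_eq_single α]
    · rw [sub_self, if_pos rfl, mul_one]
    · intro β _ hβ
      rw [if_neg, mul_zero]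
      intro h
      exact hβ (hE (sub_eq_zero.mp h)).symm
    · intro h; exact absurd (Finset.mem_univ α) h
  have hAvg : Tendsto (fun T : ℝ => (∫ t in (0:ℝ)..T,
      ⟪NormedSpace.exp ((-(Complex.I * t)) • H) ψ₀,
        Q (NormedSpace.exp ((-(Complex.I * t)) • H) ψ₀)⟫_ℂ) / (T : ℂ)) atTop
      (nhds (∑ α, K (α, α))) := by
    have heq : (fun T : ℝ => (∫ t in (0:ℝ)..T,
        ⟪NormedSpace.exp ((-(Complex.I * t)) • H) ψ₀,
          Q (NormedSpace.exp ((-(Complex.I * t)) • H) ψ₀)⟫_ℂ) / (T : ℂ))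
        = fun T : ℝ => ∑ p : Fin D × Fin D, K p *
            ((∫ t in (0:ℝ)..T, Complex.exp (Complex.I * ((E p.1 - E p.2 : ℝ)) * t)) / (T : ℂ)) := by
      funext T
      rw [hIntEq T, Finset.sum_div]
      exact Finset.sum_congr rfl fun p _ => mul_div_assoc _ _ _
    rw [heq, ← hval]
    exact tendsto_finset_sum _ fun p _ => (avg_cexp (E p.1 - E p.2)).const_mul (K p)
  -- real average
  have hre : (fun T : ℝ => ((∫ t in (0:ℝ)..T,
      ⟪NormedSpace.exp ((-(Complex.I * t)) • H) ψ₀,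
        Q (NormedSpace.exp ((-(Complex.I * t)) • H) ψ₀)⟫_ℂ) / (T : ℂ)).re)
      =ᶠ[atTop] fun T : ℝ => (∫ t in Set.Ioo (0:ℝ) T,
        (⟪NormedSpace.exp ((-(Complex.I * t)) • H) ψ₀,
          Q (NormedSpace.exp ((-(Complex.I * t)) • H) ψ₀)⟫_ℂ).re) / T := by
    filter_upwards [eventually_gt_atTop (0:ℝ)] with T hT
    have hInt : IntegrableOn (fun t : ℝ => ⟪NormedSpace.exp ((-(Complex.I * t)) • H) ψ₀,
        Q (NormedSpace.exp ((-(Complex.I * t)) • H) ψ₀)⟫_ℂ) (Set.Ioo 0 T) :=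
      (hFc.integrableOn_Icc).mono_set Set.Ioo_subset_Icc_self
    rw [Complex.div_ofReal_re, intervalIntegral.integral_of_le hT.le,
      MeasureTheory.integral_Ioc_eq_integral_Ioo]
    congr 1
    exact (integral_re hInt).symm
  have hA : Tendsto (fun T : ℝ => (∫ t in Set.Ioo (0:ℝ) T,
      (⟪NormedSpace.exp ((-(Complex.I * t)) • H) ψ₀,
        Q (NormedSpace.exp ((-(Complex.I * t)) • H) ψ₀)⟫_ℂ).re) / T) atTop
      (nhds (∑ α, K (α, α)).re) :=
    ((Complex.continuous_re.tendsto _).comp hAvg).congr' hre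
  -- the limit is small
  have hL : (∑ α, K (α, α)).re ≤ η * δ' := by
    rw [Complex.re_sum]
    have h1 : ∀ α, (K (α, α)).re = Complex.normSq (c α) * (⟪φ α, Q (φ α)⟫_ℂ).re := by
      intro α
      have hcc : (starRingEnd ℂ) (c α) * c α = (Complex.normSq (c α) : ℂ) := by
        rw [mul_comm, Complex.mul_conj]
      rw [hK]
      simp only
      rw [hcc, Complex.re_ofReal_mul]
    have h2 : ∀ α, (⟪φ α, Q (φ α)⟫_ℂ).re ≤ η * δ' := by
      intro α
      rw [hQapp, inner_sub_right, Complex.sub_re]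
      have h11 : ⟪φ α, φ α⟫_ℂ = 1 := by rw [hONite α α, if_pos rfl]
      rw [h11, Complex.one_re]
      linarith [hgood α]
    have h3 : ∑ α, Complex.normSq (c α) = 1 := by
      have hcc : ∀ α, ((starRingEnd ℂ) (c α) * c α).re = Complex.normSq (c α) := fun α => by
        rw [mul_comm, Complex.mul_conj, Complex.ofReal_re]
      have h := congrArg Complex.re hnormsum
      rw [Complex.re_sum] at h
      simp_rw [hcc] at h
      simpa using h
    calc ∑ α, (K (α, α)).re
        = ∑ α, Complex.normSq (c α) * (⟪φ α, Q (φ α)⟫_ℂ).re :=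
          Finset.sum_congr rfl fun α _ => h1 α
      _ ≤ ∑ α, Complex.normSq (c α) * (η * δ') :=
          Finset.sum_le_sum fun α _ =>
            mul_le_mul_of_nonneg_left (h2 α) (Complex.normSq_nonneg _)
      _ = η * δ' := by rw [← Finset.sum_mul, h3, one_mul]
  exact liminf_aux
    (fun t : ℝ => (⟪NormedSpace.exp ((-(Complex.I * t)) • H) ψ₀,
      P (NormedSpace.exp ((-(Complex.I * t)) • H) ψ₀)⟫_ℂ).re)
    (fun t : ℝ => (⟪NormedSpace.exp ((-(Complex.I * t)) • H) ψ₀,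
      Q (NormedSpace.exp ((-(Complex.I * t)) • H) ψ₀)⟫_ℂ).re)
    η δ' _ hη0 hgc (fun t => hg0x _) hfg hA hL
end

section
/- Let H be a self-adjoint operator on ℂ^D with pairwise distinct eigenvalues E₁,…,E_D and orthonormal eigenbasis φ₁,…,φ_D, let P be a linear operator on ℂ^D, and let ψ₀ = ∑_{α=1}^D c_α φ_α be any vector. Then the time average lim_{T→∞} (1/T)∫₀^T ⟨e^{−iHt} ψ₀, P e^{−iHt} ψ₀⟩ dt exists and equals ∑_{α=1}^D |c_α|² ⟨φ_α, P φ_α⟩. -/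
open MeasureTheory Filter Complex
open scoped InnerProductSpace

lemma exp_apply_eigen_s3 {D : ℕ} (H : EuclideanSpace ℂ (Fin D) →L[ℂ] EuclideanSpace ℂ (Fin D))
    (a : ℂ) (e : ℂ) (v : EuclideanSpace ℂ (Fin D)) (hv : H v = e • v) :
    NormedSpace.exp (a • H) v = Complex.exp (a * e) • v := by
  have hpow : ∀ n : ℕ, ((a • H) ^ n) v = (a * e) ^ n • v := by
    intro n
    induction n with
    | zero => simp
    | succ n ih =>
      rw [pow_succ, pow_succ]
      have : ((a • H) ^ n * (a • H)) v = ((a • H) ^ n) ((a • H) v) := rfl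
      rw [this]
      simp only [ContinuousLinearMap.smul_apply, hv, _root_.map_smul, ih, smul_smul]
      congr 1
      ring
  have h1 : NormedSpace.exp (a • H) v
      = ∑' n : ℕ, ((n.factorial : ℂ)⁻¹ • (a • H) ^ n) v := by
    rw [NormedSpace.exp_eq_tsum ℂ]
    exact (ContinuousLinearMap.apply ℂ (EuclideanSpace ℂ (Fin D)) v).map_tsum
      (NormedSpace.expSeries_summable' (𝕂 := ℂ) (a • H))
  rw [h1]
  have h2 : ∀ n : ℕ, ((n.factorial : ℂ)⁻¹ • (a • H) ^ n) v
      = ((n.factorial : ℂ)⁻¹ * (a * e) ^ n) • v := by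
    intro n
    simp [ContinuousLinearMap.smul_apply, hpow n, smul_smul]
  simp_rw [h2]
  have hsumm : Summable fun n : ℕ => ((n.factorial : ℂ)⁻¹ * (a * e) ^ n) := by
    simpa [smul_eq_mul] using NormedSpace.expSeries_summable' (𝕂 := ℂ) (a * e)
  rw [hsumm.tsum_smul_const]
  congr 1
  rw [Complex.exp_eq_exp_ℂ, NormedSpace.exp_eq_tsum ℂ]
  simp [smul_eq_mul]

/-- for a self-adjoint operator `H` on `ℂ^D` with pairwise distinct
eigenvalues `E₁,…,E_D` and orthonormal eigenbasis `φ₁,…,φ_D`, any operator `P`, and any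
vector `ψ₀ = ∑ c_α φ_α`, the time average
`lim_{T→∞} (1/T)∫₀^T ⟨e^{−iHt}ψ₀, P e^{−iHt}ψ₀⟩ dt` exists and equals
`∑_α |c_α|² ⟨φ_α, P φ_α⟩`. -/
theorem stmt3 (D : ℕ) (hD : 0 < D)
    (H P : EuclideanSpace ℂ (Fin D) →L[ℂ] EuclideanSpace ℂ (Fin D))
    (hH : IsSelfAdjoint H)
    (E : Fin D → ℝ) (hE : Function.Injective E)
    (φ : Fin D → EuclideanSpace ℂ (Fin D))
    (hON : Orthonormal ℂ φ)
    (heig : ∀ α, H (φ α) = (E α : ℂ) • φ α)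
    (c : Fin D → ℂ) :
    Tendsto
      (fun T : ℝ => (T : ℂ)⁻¹ *
        ∫ t in (0:ℝ)..T,
          (⟪NormedSpace.exp ((-(Complex.I * t)) • H) (∑ α, c α • φ α),
            P (NormedSpace.exp ((-(Complex.I * t)) • H) (∑ α, c α • φ α))⟫_ℂ))
      atTop
      (nhds (∑ α, (‖c α‖^2 : ℂ) * ⟪φ α, P (φ α)⟫_ℂ)) := by
  classical
  set M : Fin D → Fin D → ℂ :=
    fun α β => (starRingEnd ℂ) (c α) * c β * ⟪φ α, P (φ β)⟫_ℂ with hM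
  -- Step B: evolved state
  have hψ : ∀ t : ℝ, NormedSpace.exp ((-(Complex.I * t)) • H) (∑ α, c α • φ α)
      = ∑ α, (c α * Complex.exp (-(Complex.I * t) * (E α : ℂ))) • φ α := by
    intro t
    rw [map_sum]
    refine Finset.sum_congr rfl fun α _ => ?_
    rw [_root_.map_smul, exp_apply_eigen_s3 H _ _ _ (heig α), smul_smul]
  -- Step C: integrand expansion
  have hinner : ∀ t : ℝ,
      (⟪NormedSpace.exp ((-(Complex.I * t)) • H) (∑ α, c α • φ α),
        P (NormedSpace.exp ((-(Complex.I * t)) • H) (∑ α, c α • φ α))⟫_ℂ)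
      = ∑ α, ∑ β, M α β * Complex.exp ((Complex.I * ((E α : ℂ) - E β)) * t) := by
    intro t
    rw [hψ]
    rw [map_sum, sum_inner, ]
    refine Finset.sum_congr rfl fun α _ => ?_
    rw [inner_sum]
    refine Finset.sum_congr rfl fun β _ => ?_
    rw [_root_.map_smul, inner_smul_left, inner_smul_right]
    rw [map_mul, ← Complex.exp_conj]
    have hconj : (starRingEnd ℂ) (-(Complex.I * t) * (E α : ℂ)) = Complex.I * t * E α := by
      simp [mul_comm]
    rw [hconj]
    rw [show Complex.I * ((E α:ℂ) - E β) * t = (Complex.I*t*E α) + (-(Complex.I*t)*E β) by ring,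
        Complex.exp_add]
    ring
  -- Step D: integral computation
  have hint : ∀ T : ℝ,
      (∫ t in (0:ℝ)..T,
        (⟪NormedSpace.exp ((-(Complex.I * t)) • H) (∑ α, c α • φ α),
          P (NormedSpace.exp ((-(Complex.I * t)) • H) (∑ α, c α • φ α))⟫_ℂ))
      = ∑ α, ∑ β, M α β *
          (if α = β then (T : ℂ)
           else (Complex.exp ((Complex.I * ((E α : ℂ) - E β)) * T) - 1)
                  / (Complex.I * ((E α : ℂ) - E β))) := by
    intro T
    have hig : ∀ (α β : Fin D), IntervalIntegrable
        (fun t : ℝ => M α β * Complex.exp ((Complex.I * ((E α : ℂ) - E β)) * t))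
        volume 0 T := by
      intro α β
      exact (Continuous.intervalIntegrable (by fun_prop) 0 T)
    rw [intervalIntegral.integral_congr (g := fun t : ℝ =>
        ∑ α, ∑ β, M α β * Complex.exp ((Complex.I * ((E α : ℂ) - E β)) * t))
        (fun t _ => hinner t)]
    rw [intervalIntegral.integral_finset_sum (fun α _ =>
      (Continuous.intervalIntegrable (by fun_prop) 0 T))]
    refine Finset.sum_congr rfl fun α _ => ?_
    rw [intervalIntegral.integral_finset_sum (fun β _ => hig α β)]
    refine Finset.sum_congr rfl fun β _ => ?_
    rw [intervalIntegral.integral_const_mul]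
    congr 1
    by_cases hab : α = β
    · subst hab
      simp
    · rw [if_neg hab]
      have hc0 : Complex.I * ((E α : ℂ) - E β) ≠ 0 := by
        apply mul_ne_zero Complex.I_ne_zero
        rw [sub_ne_zero]
        exact_mod_cast fun h => hab (hE (by exact_mod_cast h))
      rw [integral_exp_mul_complex hc0]
      simp
  -- Step E: limits
  simp only [hint]
  have htarget : (∑ α, (‖c α‖^2 : ℂ) * ⟪φ α, P (φ α)⟫_ℂ)
      = ∑ α : Fin D, ∑ β : Fin D, (if α = β then M α β else 0) := by
    refine Finset.sum_congr rfl fun α _ => ?_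
    rw [Finset.sum_ite_eq Finset.univ α (M α)]
    simp only [Finset.mem_univ, if_true, hM]
    rw [Complex.conj_mul']
  rw [htarget]
  simp only [Finset.mul_sum]
  refine tendsto_finset_sum _ fun α _ => tendsto_finset_sum _ fun β _ => ?_
  by_cases hab : α = β
  · -- diagonal term
    simp only [hab, if_pos rfl, ↓reduceIte]
    refine Tendsto.congr' ?_ (tendsto_const_nhds (x := M β β))
    filter_upwards [eventually_gt_atTop (0:ℝ)] with T hT
    have hT0 : (T : ℂ) ≠ 0 := by exact_mod_cast hT.ne'
    field_simp
  · -- off-diagonal term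
    simp only [if_neg hab]
    set w : ℂ := Complex.I * ((E α : ℂ) - E β) with hw
    have hc0 : w ≠ 0 := by
      apply mul_ne_zero Complex.I_ne_zero
      rw [sub_ne_zero]
      exact_mod_cast fun h => hab (hE (by exact_mod_cast h))
    apply squeeze_zero_norm (a := fun T : ℝ => |T|⁻¹ * (‖M α β‖ * (2 / ‖w‖)))
    · intro T
      rw [norm_mul, norm_inv, Complex.norm_real, Real.norm_eq_abs, norm_mul, norm_div]
      gcongr
      calc ‖Complex.exp (w * T) - 1‖ ≤ ‖Complex.exp (w * T)‖ + ‖(1:ℂ)‖ := norm_sub_le _ _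
        _ = 2 := by
          rw [norm_one, Complex.norm_exp]
          have hre : (w * (T:ℂ)).re = 0 := by
            simp [hw, Complex.mul_re, Complex.mul_im, Complex.sub_re, Complex.sub_im]
          rw [hre, Real.exp_zero]
          norm_num
    · have h1 : Tendsto (fun T : ℝ => |T|⁻¹) atTop (nhds 0) :=
        tendsto_inv_atTop_zero.comp tendsto_abs_atTop_atTop
      simpa using h1.mul_const (‖M α β‖ * (2 / ‖w‖))
end

section
/- Let Z₁,…,Z_N be independent standard real Gaussian random variables (mean 0, variance 1) on a probability space, and let δ > 0. Then P( |(1/N)∑_{i=1}^N Z_i² − 1| > δ ) ≤ 2·exp( −N·(δ − log(1+δ))/2 ). -/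
open MeasureTheory ProbabilityTheory Filter Real
open scoped ENNReal NNReal

lemma log_ineq_aux {δ : ℝ} (h0 : 0 < δ) (h1 : δ < 1) :
    2 * δ ≤ Real.log (1 + δ) - Real.log (1 - δ) := by
  set f : ℝ → ℝ := fun x => Real.log (1 + x) - Real.log (1 - x) - 2 * x with hf
  have key : StrictMonoOn f (Set.Icc 0 δ) := by
    apply strictMonoOn_of_deriv_pos (convex_Icc _ _)
    · apply ContinuousOn.sub
      apply ContinuousOn.sub
      · exact (continuous_const.add continuous_id).continuousOn.log
          (fun x hx => ne_of_gt (by simp only [Set.mem_Icc] at hx; simp only [Pi.add_apply, Pi.sub_apply, id_eq]; nlinarith))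
      · exact (continuous_const.sub continuous_id).continuousOn.log
          (fun x hx => ne_of_gt (by simp only [Set.mem_Icc] at hx; simp only [Pi.add_apply, Pi.sub_apply, id_eq]; nlinarith))
      · exact (continuous_const.mul continuous_id).continuousOn
    · intro x hx
      rw [interior_Icc, Set.mem_Ioo] at hx
      have hx1 : (1:ℝ) + x ≠ 0 := by nlinarith
      have hx2 : (1:ℝ) - x ≠ 0 := by nlinarith
      have d1 : HasDerivAt (fun x : ℝ => Real.log (1 + x)) (1 / (1 + x)) x := by
        simpa using (((hasDerivAt_id x).const_add 1).log hx1)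
      have d2 : HasDerivAt (fun x : ℝ => Real.log (1 - x)) (-1 / (1 - x)) x := by
        simpa using (((hasDerivAt_id x).const_sub 1).log hx2)
      have d3 : HasDerivAt (fun x : ℝ => 2 * x) 2 x := by
        simpa using (hasDerivAt_id x).const_mul 2
      have hD : HasDerivAt f (1 / (1 + x) - (-1 / (1 - x)) - 2) x := (d1.sub d2).sub d3
      rw [hD.deriv]
      have hx1' : (0:ℝ) < 1 + x := by nlinarith
      have hx2' : (0:ℝ) < 1 - x := by nlinarith
      have : 1 / (1 + x) - (-1 / (1 - x)) - 2 = 2 * x ^ 2 / ((1 + x) * (1 - x)) := by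
        field_simp; ring
      rw [this]
      exact div_pos (mul_pos two_pos (pow_pos hx.1 2)) (mul_pos hx1' hx2')
  have h := key (Set.left_mem_Icc.2 h0.le) (Set.right_mem_Icc.2 h0.le) h0
  have hf0 : f 0 = 0 := by simp [hf]
  rw [hf0] at h
  simp only [hf] at h
  linarith

lemma gauss_density_eq {t : ℝ} :
    ∀ x : ℝ, gaussianPDFReal 0 1 x * Real.exp (t * x ^ 2)
      = (Real.sqrt (2 * π))⁻¹ * Real.exp (-(1 / 2 - t) * x ^ 2) := by
  intro x
  rw [gaussianPDFReal, NNReal.coe_one, mul_one, sub_zero, mul_assoc, ← Real.exp_add]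
  congr 1
  ring

lemma ht_pos {t : ℝ} (ht : t < 1 / 2) : (0:ℝ) < 1 / 2 - t := by linarith

lemma integrable_gauss_sq_vol {t : ℝ} (ht : t < 1 / 2) :
    Integrable (fun x : ℝ => gaussianPDFReal 0 1 x * Real.exp (t * x ^ 2)) := by
  simp only [gauss_density_eq]
  exact (integrable_exp_neg_mul_sq (ht_pos ht)).const_mul _

lemma gaussianReal_eq : gaussianReal 0 1
    = volume.withDensity (fun x => ((gaussianPDFReal 0 1 x).toNNReal : ℝ≥0∞)) := by
  rw [gaussianReal_of_var_ne_zero 0 one_ne_zero]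
  rfl

lemma integrable_gauss_sq {t : ℝ} (ht : t < 1 / 2) :
    Integrable (fun x => Real.exp (t * x ^ 2)) (gaussianReal 0 1) := by
  rw [gaussianReal_eq,
    integrable_withDensity_iff_integrable_smul (measurable_gaussianPDFReal 0 1).real_toNNReal]
  have : (fun x : ℝ => ((gaussianPDFReal 0 1 x).toNNReal : ℝ≥0) • Real.exp (t * x ^ 2))
      = fun x : ℝ => gaussianPDFReal 0 1 x * Real.exp (t * x ^ 2) := by
    ext x
    simp [NNReal.smul_def, Real.coe_toNNReal _ (gaussianPDFReal_nonneg 0 1 x)]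
  rw [this]
  exact integrable_gauss_sq_vol ht

lemma integral_gauss_sq {t : ℝ} (ht : t < 1 / 2) :
    ∫ x, Real.exp (t * x ^ 2) ∂(gaussianReal 0 1) = (Real.sqrt (1 - 2 * t))⁻¹ := by
  rw [gaussianReal_eq,
    integral_withDensity_eq_integral_smul (measurable_gaussianPDFReal 0 1).real_toNNReal]
  have : (fun x : ℝ => ((gaussianPDFReal 0 1 x).toNNReal : ℝ≥0) • Real.exp (t * x ^ 2))
      = fun x : ℝ => (Real.sqrt (2 * π))⁻¹ * Real.exp (-(1 / 2 - t) * x ^ 2) := by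
    ext x
    rw [NNReal.smul_def, Real.coe_toNNReal _ (gaussianPDFReal_nonneg 0 1 x), smul_eq_mul]
    exact gauss_density_eq x
  have h1 : (0:ℝ) < 1 - 2 * t := by linarith
  have h2 : π / (1 / 2 - t) = (2 * π) * (1 - 2 * t)⁻¹ := by
    rw [eq_comm, mul_comm]
    field_simp
  rw [this, integral_const_mul, integral_gaussian, h2, Real.sqrt_mul (by positivity) ((1 - 2 * t)⁻¹),
    Real.sqrt_inv]
  have h3 : Real.sqrt (2 * π) ≠ 0 := by positivity
  field_simp

lemma mgf_gauss_sq {Ω : Type*} [MeasurableSpace Ω] (Pr : Measure Ω)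
    (Z : Ω → ℝ) (hm : Measurable Z) (hg : Measure.map Z Pr = gaussianReal 0 1)
    {t : ℝ} (ht : t < 1 / 2) :
    Integrable (fun ω => Real.exp (t * (Z ω) ^ 2)) Pr ∧
      mgf (fun ω => (Z ω) ^ 2) Pr t = (Real.sqrt (1 - 2 * t))⁻¹ := by
  have hcont : Continuous (fun x : ℝ => Real.exp (t * x ^ 2)) := by continuity
  have hg' : AEStronglyMeasurable (fun x : ℝ => Real.exp (t * x ^ 2)) (Measure.map Z Pr) :=
    hcont.aestronglyMeasurable
  constructor
  · have h := integrable_gauss_sq ht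
    rw [← hg] at h
    exact (integrable_map_measure hg' hm.aemeasurable).mp h
  · have h : ∫ ω, Real.exp (t * (Z ω) ^ 2) ∂Pr
        = ∫ x, Real.exp (t * x ^ 2) ∂(Measure.map Z Pr) :=
      (integral_map hm.aemeasurable hg').symm
    rw [mgf]
    simp only []
    rw [h, hg, integral_gauss_sq ht]

lemma chernoff_chi2 {Ω : Type*} [MeasurableSpace Ω] (Pr : Measure Ω) [IsProbabilityMeasure Pr]
    (N : ℕ) (Z : Fin N → Ω → ℝ) (hmeas : ∀ i, Measurable (Z i))
    (hindep : iIndepFun Z Pr)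
    (hgauss : ∀ i, Measure.map (Z i) Pr = gaussianReal 0 1)
    {t : ℝ} (ht : t < 1 / 2) (ε : ℝ) :
    (0 ≤ t → (Pr {ω | ε ≤ ∑ i, (Z i ω) ^ 2}).toReal
        ≤ Real.exp (-t * ε) * ((Real.sqrt (1 - 2 * t))⁻¹) ^ N)
    ∧ (t ≤ 0 → (Pr {ω | ∑ i, (Z i ω) ^ 2 ≤ ε}).toReal
        ≤ Real.exp (-t * ε) * ((Real.sqrt (1 - 2 * t))⁻¹) ^ N) := by
  classical
  set W : Fin N → Ω → ℝ := fun i ω => (Z i ω) ^ 2 with hW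
  have hWmeas : ∀ i, Measurable (W i) := fun i => (hmeas i).pow_const 2
  have hWindep : iIndepFun W Pr :=
    hindep.comp (fun _ (x : ℝ) => x ^ 2) (fun _ => measurable_id.pow_const 2)
  have hint : ∀ i, Integrable (fun ω => Real.exp (t * W i ω)) Pr := fun i =>
    (mgf_gauss_sq Pr (Z i) (hmeas i) (hgauss i) ht).1
  have hintS : Integrable (fun ω => Real.exp (t * (∑ i, W i) ω)) Pr :=
    hWindep.integrable_exp_mul_sum hWmeas (fun i _ => hint i)
  have hmgf : mgf (∑ i, W i) Pr t = ((Real.sqrt (1 - 2 * t))⁻¹) ^ N := by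
    rw [hWindep.mgf_sum hWmeas]
    rw [Finset.prod_congr rfl (fun i _ => (mgf_gauss_sq Pr (Z i) (hmeas i) (hgauss i) ht).2)]
    simp [Finset.prod_const, Finset.card_univ]
  have hset : ∀ ω, (∑ i, W i) ω = ∑ i, (Z i ω) ^ 2 := fun ω => by
    simp [hW, Finset.sum_apply]
  constructor
  · intro ht0
    have h := measure_ge_le_exp_mul_mgf (μ := Pr) (X := ∑ i, W i) ε ht0 hintS
    rw [hmgf] at h
    have hs : {ω | ε ≤ ∑ i, (Z i ω) ^ 2} = {ω | ε ≤ (∑ i, W i) ω} := by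
      ext ω; simp only [Set.mem_setOf_eq, hset ω]
    rw [hs]
    exact h
  · intro ht0
    have h := measure_le_le_exp_mul_mgf (μ := Pr) (X := ∑ i, W i) ε ht0 hintS
    rw [hmgf] at h
    have hs : {ω | ∑ i, (Z i ω) ^ 2 ≤ ε} = {ω | (∑ i, W i) ω ≤ ε} := by
      ext ω; simp only [Set.mem_setOf_eq, hset ω]
    rw [hs]
    exact h

/-- for `Z₁,…,Z_N` i.i.d. standard real Gaussians and `δ > 0`,
`P(|(1/N)∑ Zᵢ² − 1| > δ) ≤ 2 exp(−N (δ − log(1+δ))/2)`. -/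
theorem stmt7 {Ω : Type*} [MeasurableSpace Ω] (Pr : Measure Ω) [IsProbabilityMeasure Pr]
    (N : ℕ) (hN : 0 < N) (Z : Fin N → Ω → ℝ)
    (hmeas : ∀ i, Measurable (Z i))
    (hindep : iIndepFun Z Pr)
    (hgauss : ∀ i, Measure.map (Z i) Pr = gaussianReal 0 1)
    (δ : ℝ) (hδ : 0 < δ) :
    Pr {ω | |(1 / (N : ℝ)) * ∑ i, (Z i ω)^2 - 1| > δ}
      ≤ ENNReal.ofReal (2 * Real.exp (-(N : ℝ) * (δ - Real.log (1 + δ)) / 2)) := by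
  have hNpos : (0:ℝ) < (N:ℝ) := Nat.cast_pos.mpr hN
  have h1δ : (0:ℝ) < 1 + δ := by linarith
  set E := Real.exp (-(N : ℝ) * (δ - Real.log (1 + δ)) / 2) with hE
  have hE0 : 0 ≤ E := (Real.exp_pos _).le
  -- upper tail
  have hupper : Pr {ω | (N:ℝ) * (1 + δ) ≤ ∑ i, (Z i ω) ^ 2} ≤ ENNReal.ofReal E := by
    set t : ℝ := δ / (2 * (1 + δ)) with htdef
    have ht : t < 1 / 2 := by
      rw [htdef, div_lt_div_iff₀ (by positivity) (by norm_num)]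
      linarith
    have ht0 : 0 ≤ t := by positivity
    have h := (chernoff_chi2 Pr N Z hmeas hindep hgauss ht ((N:ℝ) * (1 + δ))).1 ht0
    have h2t : 1 - 2 * t = (1 + δ)⁻¹ := by
      rw [htdef]; field_simp; ring
    have hval : Real.exp (-t * ((N:ℝ) * (1 + δ))) * ((Real.sqrt (1 - 2 * t))⁻¹) ^ N = E := by
      rw [h2t, Real.sqrt_inv, inv_inv]
      have hs : Real.sqrt (1 + δ) = Real.exp (Real.log (1 + δ) / 2) := by
        rw [← Real.log_sqrt h1δ.le, Real.exp_log (Real.sqrt_pos.mpr h1δ)]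
      rw [hs, ← Real.exp_nat_mul, ← Real.exp_add, hE]
      congr 1
      rw [htdef]
      field_simp
      ring
    rw [ENNReal.le_ofReal_iff_toReal_le (measure_ne_top _ _) hE0]
    rw [← hval]
    exact h
  -- lower tail
  have hlower : Pr {ω | (1 / (N : ℝ)) * ∑ i, (Z i ω) ^ 2 - 1 < -δ} ≤ ENNReal.ofReal E := by
    by_cases hδ1 : δ < 1
    · have h1δ' : (0:ℝ) < 1 - δ := by linarith
      set t : ℝ := -(δ / (2 * (1 - δ))) with htdef
      have ht0 : t ≤ 0 := by rw [htdef]; simp; positivity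
      have ht : t < 1 / 2 := lt_of_le_of_lt ht0 (by norm_num)
      have h := (chernoff_chi2 Pr N Z hmeas hindep hgauss ht ((N:ℝ) * (1 - δ))).2 ht0
      have h2t : 1 - 2 * t = (1 - δ)⁻¹ := by
        rw [htdef]; field_simp; ring
      have hval : Real.exp (-t * ((N:ℝ) * (1 - δ))) * ((Real.sqrt (1 - 2 * t))⁻¹) ^ N
          = Real.exp ((N:ℝ) * (δ + Real.log (1 - δ)) / 2) := by
        rw [h2t, Real.sqrt_inv, inv_inv]
        have hs : Real.sqrt (1 - δ) = Real.exp (Real.log (1 - δ) / 2) := by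
          rw [← Real.log_sqrt h1δ'.le, Real.exp_log (Real.sqrt_pos.mpr h1δ')]
        rw [hs, ← Real.exp_nat_mul, ← Real.exp_add]
        congr 1
        rw [htdef]
        field_simp
      have hle : Real.exp ((N:ℝ) * (δ + Real.log (1 - δ)) / 2) ≤ E := by
        rw [hE]
        apply Real.exp_le_exp.mpr
        have := log_ineq_aux hδ hδ1
        have hN0 : (0:ℝ) ≤ (N:ℝ) := hNpos.le
        rw [div_le_div_iff₀ (by norm_num) (by norm_num)]
        nlinarith
      have hsub : {ω | (1 / (N : ℝ)) * ∑ i, (Z i ω) ^ 2 - 1 < -δ}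
          ⊆ {ω | ∑ i, (Z i ω) ^ 2 ≤ (N:ℝ) * (1 - δ)} := by
        intro ω hω
        simp only [Set.mem_setOf_eq, one_div_mul_eq_div] at hω ⊢
        have h2 : (∑ i, (Z i ω) ^ 2) / (N:ℝ) < 1 - δ := by linarith
        have h3 := (div_lt_iff₀ hNpos).mp h2
        nlinarith [h3]
      refine le_trans (measure_mono hsub) ?_
      rw [ENNReal.le_ofReal_iff_toReal_le (measure_ne_top _ _) hE0]
      exact le_trans (hval ▸ h) hle
    · have hempty : {ω | (1 / (N : ℝ)) * ∑ i, (Z i ω) ^ 2 - 1 < -δ} = ∅ := by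
        ext ω
        simp only [Set.mem_setOf_eq, Set.mem_empty_iff_false, iff_false, not_lt]
        have hsum : (0:ℝ) ≤ ∑ i, (Z i ω) ^ 2 :=
          Finset.sum_nonneg (fun i _ => sq_nonneg _)
        have : (0:ℝ) ≤ (1 / (N : ℝ)) * ∑ i, (Z i ω) ^ 2 := by positivity
        linarith [not_lt.mp hδ1]
      rw [hempty]
      simp
  -- combine
  have hsub : {ω | |(1 / (N : ℝ)) * ∑ i, (Z i ω) ^ 2 - 1| > δ}
      ⊆ {ω | (N:ℝ) * (1 + δ) ≤ ∑ i, (Z i ω) ^ 2}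
        ∪ {ω | (1 / (N : ℝ)) * ∑ i, (Z i ω) ^ 2 - 1 < -δ} := by
    intro ω hω
    simp only [Set.mem_setOf_eq, Set.mem_union, one_div_mul_eq_div] at hω ⊢
    rcases lt_abs.mp hω with h | h
    · left
      have h2 : 1 + δ < (∑ i, (Z i ω) ^ 2) / (N:ℝ) := by linarith
      have h3 := (lt_div_iff₀ hNpos).mp h2
      nlinarith [h3]
    · right
      linarith
  calc Pr {ω | |(1 / (N : ℝ)) * ∑ i, (Z i ω) ^ 2 - 1| > δ}
      ≤ Pr ({ω | (N:ℝ) * (1 + δ) ≤ ∑ i, (Z i ω) ^ 2}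
        ∪ {ω | (1 / (N : ℝ)) * ∑ i, (Z i ω) ^ 2 - 1 < -δ}) := measure_mono hsub
    _ ≤ Pr {ω | (N:ℝ) * (1 + δ) ≤ ∑ i, (Z i ω) ^ 2}
        + Pr {ω | (1 / (N : ℝ)) * ∑ i, (Z i ω) ^ 2 - 1 < -δ} := measure_union_le _ _
    _ ≤ ENNReal.ofReal E + ENNReal.ofReal E := add_le_add hupper hlower
    _ = ENNReal.ofReal (2 * E) := by
        rw [← ENNReal.ofReal_add hE0 hE0]; congr 1; ring
end

section
/- Let D and d_eq be positive integers with D/2 < d_eq ≤ D, and let G₁,…,G_D be independent complex Gaussian random variables whose real and imaginary parts are 2D independent real Gaussians with mean 0 and variance 1/(2D). Then for every ε ∈ (0,1), the probability that the ratio ∑_{β=1}^{d_eq} |G_β|² / ∑_{β=1}^{D} |G_β|² fails to lie strictly between (1 − ε/2)·(d_eq/D) and (1 + ε/2)·(d_eq/D) is at most 4·exp( −D ε² / 384 ). -/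
set_option maxHeartbeats 1000000

open MeasureTheory ProbabilityTheory Filter
open Real
open scoped NNReal ENNReal

lemma stmt11_log_ineq {x : ℝ} (hx : |x| ≤ 1/8) :
    Real.exp (-(x + (16/27)*x^2)) ≤ 1 - x := by
  have h1 : |x| < 1 := lt_of_le_of_lt hx (by norm_num)
  have key := Real.abs_log_sub_add_sum_range_le h1 3
  simp only [Finset.sum_range_succ, Finset.sum_range_zero] at key
  have hlog : -(x + x^2/2 + x^3/3) - |x|^4/(1-|x|) ≤ Real.log (1 - x) := by
    have := abs_le.1 key
    push_cast at this
    nlinarith [this.1, this.2]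
  have hsq : x^2 = |x|^2 := (sq_abs x).symm
  have habs : |x|^4/(1-|x|) ≤ x^2/56 := by
    rw [div_le_iff₀ (by linarith : (0:ℝ) < 1 - |x|), hsq]
    have ha : (0:ℝ) ≤ |x| := abs_nonneg x
    have h64 : |x|^2 ≤ 1/64 := by nlinarith
    have hm := mul_le_mul_of_nonneg_left h64 (sq_nonneg (|x|))
    nlinarith [hm, ha, hx]
  have hx3 : x^3/3 ≤ x^2/24 := by
    have h : x^3 ≤ |x| * x^2 := by
      calc x^3 ≤ |x^3| := le_abs_self _
        _ = |x| * x^2 := by rw [abs_pow]; rw [hsq]; ring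
    nlinarith [abs_nonneg x]
  have hfinal : -(x + (16/27)*x^2) ≤ Real.log (1 - x) := by nlinarith [sq_nonneg x]
  calc Real.exp (-(x + (16/27)*x^2)) ≤ Real.exp (Real.log (1-x)) := Real.exp_le_exp.2 hfinal
    _ = 1 - x := Real.exp_log (by linarith [abs_le.1 hx])

lemma stmt11_gauss_int {v : ℝ≥0} (hv : v ≠ 0) {t : ℝ} (ht : 2 * t * v < 1) :
    Integrable (fun x => Real.exp (t * x^2)) (gaussianReal 0 v) ∧
    ∫ x, Real.exp (t * x^2) ∂(gaussianReal 0 v) = (Real.sqrt (1 - 2*t*v))⁻¹ := by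
  have hv0 : (0:ℝ) < v := by positivity
  set b : ℝ := (2*(v:ℝ))⁻¹ - t with hb_def
  have hvne : (v:ℝ) ≠ 0 := ne_of_gt hv0
  have hb : 0 < b := by
    rw [hb_def, sub_pos, ← one_div, lt_div_iff₀ (by positivity)]
    linarith
  have hpdf : gaussianPDF 0 v = fun x => ((Real.toNNReal (gaussianPDFReal 0 v x) : ℝ≥0) : ℝ≥0∞) := rfl
  have hmeas : Measurable (fun x => Real.toNNReal (gaussianPDFReal 0 v x)) :=
    (measurable_gaussianPDFReal 0 v).real_toNNReal
  have hsmul : ∀ x : ℝ, (Real.toNNReal (gaussianPDFReal 0 v x) : ℝ) • Real.exp (t * x^2)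
      = (Real.sqrt (2 * π * v))⁻¹ * Real.exp (-b * x^2) := by
    intro x
    rw [smul_eq_mul, Real.coe_toNNReal _ (gaussianPDFReal_nonneg 0 v x)]
    simp only [gaussianPDFReal, sub_zero]
    rw [mul_assoc, ← Real.exp_add]
    congr 2
    rw [hb_def]
    field_simp
    ring
  have hint : Integrable (fun x => (Real.sqrt (2 * π * v))⁻¹ * Real.exp (-b * x^2)) volume :=
    (integrable_exp_neg_mul_sq hb).const_mul _
  constructor
  · rw [gaussianReal_of_var_ne_zero 0 hv, hpdf,
      integrable_withDensity_iff_integrable_smul hmeas]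
    exact hint.congr (by filter_upwards with x using (hsmul x).symm) |>.congr
      (Filter.Eventually.of_forall fun x => rfl)
  · rw [gaussianReal_of_var_ne_zero 0 hv, hpdf,
      integral_withDensity_eq_integral_smul hmeas]
    calc ∫ x, (Real.toNNReal (gaussianPDFReal 0 v x) : ℝ) • Real.exp (t * x^2)
        = ∫ x, (Real.sqrt (2 * π * v))⁻¹ * Real.exp (-b * x^2) := by
          congr 1; ext x; exact hsmul x
      _ = (Real.sqrt (2 * π * v))⁻¹ * ∫ x, Real.exp (-b * x^2) := integral_const_mul _ _
      _ = (Real.sqrt (2 * π * v))⁻¹ * Real.sqrt (π / b) := by rw [integral_gaussian]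
      _ = (Real.sqrt (1 - 2*t*v))⁻¹ := by
          have h2vb : 1 - 2*t*(v:ℝ) = (2*(v:ℝ)) * b := by rw [hb_def]; field_simp
          have hs2v : Real.sqrt (2*(v:ℝ)) ≠ 0 := by positivity
          have hsb : Real.sqrt b ≠ 0 := by positivity
          have hspi : Real.sqrt π ≠ 0 := by positivity
          have e1 : Real.sqrt (2*π*(v:ℝ)) = Real.sqrt π * Real.sqrt (2*(v:ℝ)) := by
            rw [show 2*π*(v:ℝ) = π*(2*(v:ℝ)) by ring, Real.sqrt_mul Real.pi_pos.le]
          have e2 : Real.sqrt (2*(v:ℝ)*b) = Real.sqrt (2*(v:ℝ)) * Real.sqrt b :=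
            Real.sqrt_mul (by positivity) _
          rw [h2vb, e1, e2, Real.sqrt_div Real.pi_pos.le]
          field_simp

lemma stmt11_mgf {Ω : Type*} [MeasurableSpace Ω] (Pr : Measure Ω) [IsProbabilityMeasure Pr]
    {v : ℝ≥0} (hv : v ≠ 0) {Y : Ω → ℝ} (hY : Measurable Y)
    (hmap : Measure.map Y Pr = gaussianReal 0 v) {t : ℝ} (ht : |t * v| ≤ 1/16) :
    Integrable (fun ω => Real.exp (t * (Y ω)^2)) Pr ∧
    mgf (fun ω => (Y ω)^2) Pr t ≤ Real.exp (t*v + (32/27)*t^2*(v:ℝ)^2) := by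
  have htabs := abs_le.1 ht
  have ht2 : 2*t*(v:ℝ) < 1 := by nlinarith [htabs.2]
  obtain ⟨hi, heq⟩ := stmt11_gauss_int hv ht2
  have hgm : Measurable (fun x : ℝ => Real.exp (t * x^2)) :=
    (measurable_id.pow_const 2).const_mul t |>.exp
  have hint : Integrable (fun ω => Real.exp (t * (Y ω)^2)) Pr := by
    rw [← hmap] at hi
    exact (integrable_map_measure hgm.aestronglyMeasurable hY.aemeasurable).mp hi
  refine ⟨hint, ?_⟩
  have hmgf : mgf (fun ω => (Y ω)^2) Pr t = (Real.sqrt (1 - 2*t*v))⁻¹ := by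
    rw [← heq, ← hmap, integral_map hY.aemeasurable hgm.aestronglyMeasurable]
    rfl
  set x : ℝ := 2*t*(v:ℝ) with hx_def
  have hxabs : |x| ≤ 1/8 := by
    rw [hx_def, show 2*t*(v:ℝ) = 2*(t*v) by ring, abs_mul, abs_two]
    linarith [ht]
  have hlog := stmt11_log_ineq hxabs
  have h1x : (0:ℝ) < 1 - x := by
    have := (abs_le.1 hxabs).2; linarith
  set s : ℝ := x + (16/27)*x^2 with hs_def
  have hsq : Real.exp (-s/2) ≤ Real.sqrt (1-x) := by
    rw [Real.le_sqrt (Real.exp_pos _).le h1x.le]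
    calc Real.exp (-s/2) ^ 2 = Real.exp (-s) := by rw [sq, ← Real.exp_add]; ring_nf
      _ ≤ 1 - x := hlog
  have hinv : (Real.sqrt (1-x))⁻¹ ≤ Real.exp (s/2) := by
    have := inv_anti₀ (Real.exp_pos (-s/2)) hsq
    rwa [← Real.exp_neg, show -(-s/2) = s/2 by ring] at this
  have hs2 : s/2 = t*(v:ℝ) + (32/27)*t^2*(v:ℝ)^2 := by rw [hs_def, hx_def]; ring
  rw [hmgf]
  rw [hs2] at hinv
  exact hinv

section chernoff
variable {Ω : Type*} [MeasurableSpace Ω] (Pr : Measure Ω)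
    [IsProbabilityMeasure Pr] {ι : Type*} {v : ℝ≥0} (hv : v ≠ 0)
    (X : ι → Ω → ℝ) (hXm : ∀ j, Measurable (X j))
    (hind : iIndepFun X Pr)
    (hmap : ∀ j, Measure.map (X j) Pr = gaussianReal 0 v)

include hv hXm hind hmap

lemma stmt11_mgf_sum_le (A : Finset ι) {t : ℝ} (ht : |t * v| ≤ 1/16) :
    mgf (∑ j ∈ A, fun ω => (X j ω)^2) Pr t
      ≤ Real.exp (A.card * (t*v + (32/27)*t^2*(v:ℝ)^2)) := by
  have hWind : iIndepFun (fun j => fun ω => (X j ω)^2) Pr :=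
    hind.comp (fun _ x => x^2) (fun _ => measurable_id.pow_const 2)
  have hWm : ∀ j, Measurable (fun ω => (X j ω)^2) := fun j => (hXm j).pow_const 2
  rw [hWind.mgf_sum hWm A]
  calc ∏ j ∈ A, mgf (fun ω => (X j ω)^2) Pr t
      ≤ ∏ _j ∈ A, Real.exp (t*v + (32/27)*t^2*(v:ℝ)^2) :=
        Finset.prod_le_prod (fun j _ => mgf_nonneg)
          (fun j _ => (stmt11_mgf Pr hv (hXm j) (hmap j) ht).2)
    _ = Real.exp (A.card * (t*v + (32/27)*t^2*(v:ℝ)^2)) := by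
        rw [Finset.prod_const, ← Real.exp_nat_mul]

lemma stmt11_chernoff_upper (A : Finset ι) {t : ℝ} (ht : |t * v| ≤ 1/16) (ht0 : 0 ≤ t) (c : ℝ) :
    Pr {ω | c ≤ ∑ j ∈ A, (X j ω)^2}
      ≤ ENNReal.ofReal (Real.exp (-(t*c) + A.card * (t*v + (32/27)*t^2*(v:ℝ)^2))) := by
  have hWind : iIndepFun (fun j => fun ω => (X j ω)^2) Pr :=
    hind.comp (fun _ x => x^2) (fun _ => measurable_id.pow_const 2)
  have hWm : ∀ j, Measurable (fun ω => (X j ω)^2) := fun j => (hXm j).pow_const 2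
  have hSint : Integrable (fun ω => Real.exp (t * (∑ j ∈ A, fun ω' => (X j ω')^2) ω)) Pr :=
    hWind.integrable_exp_mul_sum hWm (fun j _ => (stmt11_mgf Pr hv (hXm j) (hmap j) ht).1)
  have hset : {ω | c ≤ ∑ j ∈ A, (X j ω)^2}
      = {ω | c ≤ (∑ j ∈ A, fun ω' => (X j ω')^2) ω} := by
    ext ω; simp [Finset.sum_apply]
  have hch := measure_ge_le_exp_mul_mgf (μ := Pr) (X := ∑ j ∈ A, fun ω' => (X j ω')^2)
    c ht0 hSint
  rw [hset]
  refine (ENNReal.le_ofReal_iff_toReal_le (measure_ne_top Pr _) (Real.exp_pos _).le).mpr ?_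
  refine hch.trans ?_
  rw [Real.exp_add, ← neg_mul]
  exact mul_le_mul_of_nonneg_left (stmt11_mgf_sum_le Pr hv X hXm hind hmap A ht)
    (Real.exp_pos _).le

lemma stmt11_chernoff_lower (A : Finset ι) {t : ℝ} (ht : |t * v| ≤ 1/16) (ht0 : 0 ≤ t) (c : ℝ) :
    Pr {ω | ∑ j ∈ A, (X j ω)^2 ≤ c}
      ≤ ENNReal.ofReal (Real.exp (t*c + A.card * (-(t*(v:ℝ)) + (32/27)*t^2*(v:ℝ)^2))) := by
  have hWind : iIndepFun (fun j => fun ω => (X j ω)^2) Pr :=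
    hind.comp (fun _ x => x^2) (fun _ => measurable_id.pow_const 2)
  have hWm : ∀ j, Measurable (fun ω => (X j ω)^2) := fun j => (hXm j).pow_const 2
  have ht' : |(-t) * (v:ℝ)| ≤ 1/16 := by rwa [neg_mul, abs_neg]
  have hSint : Integrable (fun ω => Real.exp ((-t) * (∑ j ∈ A, fun ω' => (X j ω')^2) ω)) Pr :=
    hWind.integrable_exp_mul_sum hWm (fun j _ => (stmt11_mgf Pr hv (hXm j) (hmap j) ht').1)
  have hset : {ω | ∑ j ∈ A, (X j ω)^2 ≤ c}
      = {ω | (∑ j ∈ A, fun ω' => (X j ω')^2) ω ≤ c} := by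
    ext ω; simp [Finset.sum_apply]
  have hch := measure_le_le_exp_mul_mgf (μ := Pr) (X := ∑ j ∈ A, fun ω' => (X j ω')^2)
    (t := -t) c (neg_nonpos.mpr ht0) hSint
  rw [hset]
  refine (ENNReal.le_ofReal_iff_toReal_le (measure_ne_top Pr _) (Real.exp_pos _).le).mpr ?_
  refine hch.trans ?_
  rw [Real.exp_add, neg_neg]
  have := stmt11_mgf_sum_le Pr hv X hXm hind hmap A ht'
  rw [show (-t)*(v:ℝ) = -(t*(v:ℝ)) by ring, show (-t)^2 = t^2 by ring] at this
  exact mul_le_mul_of_nonneg_left this (Real.exp_pos _).le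

end chernoff

/-- for a standard complex Gaussian vector `G = (G₁,…,G_D)` (real and
imaginary parts `2D` independent real Gaussians of mean `0`, variance `1/(2D)`) and
`D/2 < d_eq ≤ D`, for every `ε ∈ (0,1)`, the probability that
`∑_{β≤d_eq}|G_β|² / ∑_{β≤D}|G_β|²` fails to lie strictly between
`(1 − ε/2)(d_eq/D)` and `(1 + ε/2)(d_eq/D)` is at most `4 exp(−D ε²/384)`. -/
theorem stmt11 {Ω : Type*} [MeasurableSpace Ω] (Pr : Measure Ω) [IsProbabilityMeasure Pr]
    (D deq : ℕ) (hD : 0 < D) (hdeq : deq ≤ D) (hhalf : (D : ℝ)/2 < deq)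
    (G : Fin D → Ω → ℂ)
    (hmeas : ∀ β, Measurable (G β))
    (hindep : iIndepFun
      (Sum.elim (fun β : Fin D => fun ω => (G β ω).re)
                (fun β : Fin D => fun ω => (G β ω).im)) Pr)
    (hgauss : ∀ j : Fin D ⊕ Fin D,
      Measure.map
        (Sum.elim (fun β : Fin D => fun ω => (G β ω).re)
                  (fun β : Fin D => fun ω => (G β ω).im) j) Pr
        = gaussianReal 0 (1 / (2 * D) : ℝ≥0))
    (ε : ℝ) (hε : ε ∈ Set.Ioo (0:ℝ) 1) :
    Pr {ω | ¬ ((1 - ε/2) * ((deq : ℝ)/D)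
            < (∑ β ∈ Finset.univ.filter (fun β : Fin D => (β : ℕ) < deq), ‖G β ω‖^2)
              / (∑ β, ‖G β ω‖^2)
          ∧ (∑ β ∈ Finset.univ.filter (fun β : Fin D => (β : ℕ) < deq), ‖G β ω‖^2)
              / (∑ β, ‖G β ω‖^2)
            < (1 + ε/2) * ((deq : ℝ)/D))}
      ≤ ENNReal.ofReal (4 * Real.exp (-((D : ℝ) * ε^2) / 384)) := by
  obtain ⟨hε0, hε1⟩ := hε
  have hD0 : (0:ℝ) < D := by exact_mod_cast hD
  set X : Fin D ⊕ Fin D → Ω → ℝ :=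
    Sum.elim (fun β : Fin D => fun ω => (G β ω).re)
             (fun β : Fin D => fun ω => (G β ω).im) with hX_def
  have hXm : ∀ j, Measurable (X j) := by
    rintro (β|β)
    · exact Complex.measurable_re.comp (hmeas β)
    · exact Complex.measurable_im.comp (hmeas β)
  set v : ℝ≥0 := (1 / (2 * D) : ℝ≥0) with hv_def
  have hvr : (v:ℝ) = 1/(2*(D:ℝ)) := by rw [hv_def]; push_cast; ring
  have hv : v ≠ 0 := by
    have h : (0:ℝ) < (v:ℝ) := by rw [hvr]; positivity
    exact fun hz => by rw [hz] at h; simp at h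
  set t : ℝ := 3*ε*D/32 with ht_def
  have htv : t*(v:ℝ) = 3*ε/64 := by rw [hvr, ht_def]; field_simp; ring
  have ht : |t * (v:ℝ)| ≤ 1/16 := by
    rw [htv, abs_of_nonneg (by positivity)]; linarith
  have ht0 : 0 ≤ t := by rw [ht_def]; positivity
  set B : Finset (Fin D ⊕ Fin D) :=
    (Finset.univ.filter (fun β : Fin D => (β:ℕ) < deq)).disjSum
      (Finset.univ.filter (fun β : Fin D => (β:ℕ) < deq)) with hB_def
  have hm : (Finset.univ.filter (fun β : Fin D => (β : ℕ) < deq)).card = deq := by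
    rw [Finset.card_filter]
    rw [Fin.sum_univ_eq_sum_range (fun i => if i < deq then (1:ℕ) else 0) D]
    rw [← Finset.card_filter]
    have : (Finset.range D).filter (fun i => i < deq) = Finset.range deq := by
      ext a; simp only [Finset.mem_filter, Finset.mem_range]; omega
    rw [this, Finset.card_range]
  have hBcard : B.card = deq + deq := by rw [hB_def, Finset.card_disjSum, hm]
  have hUcard : (Finset.univ : Finset (Fin D ⊕ Fin D)).card = D + D := by
    simp [Finset.card_univ]
  have hnorm : ∀ (β : Fin D) ω, ‖G β ω‖^2 = (G β ω).re^2 + (G β ω).im^2 := fun β ω => by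
    rw [Complex.sq_norm, Complex.normSq_apply]; ring
  have hT : ∀ ω, (∑ j ∈ (Finset.univ : Finset (Fin D ⊕ Fin D)), (X j ω)^2)
      = ∑ β, ‖G β ω‖^2 := by
    intro ω
    rw [show (∑ j ∈ (Finset.univ : Finset (Fin D ⊕ Fin D)), (X j ω)^2)
        = ∑ j : Fin D ⊕ Fin D, (X j ω)^2 from rfl, Fintype.sum_sum_type]
    simp only [hX_def, Sum.elim_inl, Sum.elim_inr]
    rw [← Finset.sum_add_distrib]
    exact Finset.sum_congr rfl fun β _ => (hnorm β ω).symm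
  have hT1 : ∀ ω, (∑ j ∈ B, (X j ω)^2)
      = ∑ β ∈ Finset.univ.filter (fun β : Fin D => (β : ℕ) < deq), ‖G β ω‖^2 := by
    intro ω
    rw [hB_def, Finset.sum_disjSum]
    simp only [hX_def, Sum.elim_inl, Sum.elim_inr]
    rw [← Finset.sum_add_distrib]
    exact Finset.sum_congr rfl fun β _ => (hnorm β ω).symm
  set p : ℝ := (deq:ℝ)/D with hp_def
  have hp0 : 0 < p := by
    rw [hp_def]; apply div_pos _ hD0; linarith
  have hp1 : p ≤ 1 := by
    rw [hp_def, div_le_one hD0]; exact_mod_cast hdeq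
  have hphalf : 1/2 < p := by
    rw [hp_def, lt_div_iff₀ hD0]; linarith
  -- the four bad events
  set S1 : Set Ω := {ω | ∑ j ∈ (Finset.univ : Finset (Fin D ⊕ Fin D)), (X j ω)^2 ≤ 1 - ε/9}
  set S2 : Set Ω := {ω | 1 + ε/9 ≤ ∑ j ∈ (Finset.univ : Finset (Fin D ⊕ Fin D)), (X j ω)^2}
  set S3 : Set Ω := {ω | ∑ j ∈ B, (X j ω)^2 ≤ (1 - ε/9)*p}
  set S4 : Set Ω := {ω | (1 + ε/9)*p ≤ ∑ j ∈ B, (X j ω)^2}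
  have hsub : {ω | ¬ ((1 - ε/2) * ((deq : ℝ)/D)
            < (∑ β ∈ Finset.univ.filter (fun β : Fin D => (β : ℕ) < deq), ‖G β ω‖^2)
              / (∑ β, ‖G β ω‖^2)
          ∧ (∑ β ∈ Finset.univ.filter (fun β : Fin D => (β : ℕ) < deq), ‖G β ω‖^2)
              / (∑ β, ‖G β ω‖^2)
            < (1 + ε/2) * ((deq : ℝ)/D))} ⊆ (S1 ∪ S2) ∪ (S3 ∪ S4) := by
    intro ω hω
    by_contra hc
    simp only [S1, S2, S3, S4, Set.mem_union, Set.mem_setOf_eq, not_or, not_le] at hc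
    obtain ⟨⟨h1, h2⟩, h3, h4⟩ := hc
    rw [hT ω] at h1 h2
    rw [hT1 ω] at h3 h4
    apply hω
    set T : ℝ := ∑ β, ‖G β ω‖^2
    set T1 : ℝ := ∑ β ∈ Finset.univ.filter (fun β : Fin D => (β : ℕ) < deq), ‖G β ω‖^2
    have hTpos : 0 < T := by nlinarith
    constructor
    · show (1 - ε/2) * p < T1 / T
      rw [lt_div_iff₀ hTpos]
      nlinarith [mul_pos hp0 hε0]
    · show T1 / T < (1 + ε/2) * p
      rw [div_lt_iff₀ hTpos]
      nlinarith [mul_pos hp0 hε0]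
  have he0 : (0:ℝ) ≤ Real.exp (-((D : ℝ) * ε^2) / 384) := (Real.exp_pos _).le
  have hb1 : Pr S1 ≤ ENNReal.ofReal (Real.exp (-((D : ℝ) * ε^2) / 384)) := by
    refine (stmt11_chernoff_lower Pr hv X hXm hindep hgauss Finset.univ ht ht0 (1 - ε/9)).trans ?_
    apply ENNReal.ofReal_le_ofReal
    apply Real.exp_le_exp.2
    rw [hUcard, htv, hvr, ht_def]
    push_cast
    have h1a : 3*ε*(D:ℝ)/32 * (1-ε/9) = 3*ε*(D:ℝ)/32 - (D:ℝ)*ε^2/96 := by ring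
    have h1b : ((D:ℝ)+(D:ℝ)) * (-(3*ε/64) + 32/27*(3*ε*(D:ℝ)/32)^2*(1/(2*(D:ℝ)))^2)
        = -(3*ε*(D:ℝ)/32) + (D:ℝ)*ε^2/192 := by field_simp; ring
    linarith [h1a, h1b, mul_nonneg hD0.le (sq_nonneg ε)]
  have hb2 : Pr S2 ≤ ENNReal.ofReal (Real.exp (-((D : ℝ) * ε^2) / 384)) := by
    refine (stmt11_chernoff_upper Pr hv X hXm hindep hgauss Finset.univ ht ht0 (1 + ε/9)).trans ?_
    apply ENNReal.ofReal_le_ofReal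
    apply Real.exp_le_exp.2
    rw [hUcard, htv, hvr, ht_def]
    push_cast
    have h2a : -(3*ε*(D:ℝ)/32 * (1+ε/9)) = -(3*ε*(D:ℝ)/32) - (D:ℝ)*ε^2/96 := by ring
    have h2b : ((D:ℝ)+(D:ℝ)) * (3*ε/64 + 32/27*(3*ε*(D:ℝ)/32)^2*(1/(2*(D:ℝ)))^2)
        = 3*ε*(D:ℝ)/32 + (D:ℝ)*ε^2/192 := by field_simp; ring
    linarith [h2a, h2b, mul_nonneg hD0.le (sq_nonneg ε)]
  have hb3 : Pr S3 ≤ ENNReal.ofReal (Real.exp (-((D : ℝ) * ε^2) / 384)) := by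
    refine (stmt11_chernoff_lower Pr hv X hXm hindep hgauss B ht ht0 ((1 - ε/9)*p)).trans ?_
    apply ENNReal.ofReal_le_ofReal
    apply Real.exp_le_exp.2
    rw [hBcard, htv, hvr, ht_def, hp_def]
    push_cast
    have h3a : 3*ε*(D:ℝ)/32 * ((1-ε/9)*((deq:ℝ)/(D:ℝ)))
        = 3*ε*(deq:ℝ)/32 - (deq:ℝ)*ε^2/96 := by field_simp; ring
    have h3b : ((deq:ℝ)+(deq:ℝ)) * (-(3*ε/64) + 32/27*(3*ε*(D:ℝ)/32)^2*(1/(2*(D:ℝ)))^2)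
        = -(3*ε*(deq:ℝ)/32) + (deq:ℝ)*ε^2/192 := by field_simp; ring
    have hd2 : (D:ℝ) ≤ 2*(deq:ℝ) := by linarith
    linarith [h3a, h3b, mul_le_mul_of_nonneg_right hd2 (sq_nonneg ε)]
  have hb4 : Pr S4 ≤ ENNReal.ofReal (Real.exp (-((D : ℝ) * ε^2) / 384)) := by
    refine (stmt11_chernoff_upper Pr hv X hXm hindep hgauss B ht ht0 ((1 + ε/9)*p)).trans ?_
    apply ENNReal.ofReal_le_ofReal
    apply Real.exp_le_exp.2
    rw [hBcard, htv, hvr, ht_def, hp_def]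
    push_cast
    have h4a : -(3*ε*(D:ℝ)/32 * ((1+ε/9)*((deq:ℝ)/(D:ℝ))))
        = -(3*ε*(deq:ℝ)/32) - (deq:ℝ)*ε^2/96 := by field_simp; ring
    have h4b : ((deq:ℝ)+(deq:ℝ)) * (3*ε/64 + 32/27*(3*ε*(D:ℝ)/32)^2*(1/(2*(D:ℝ)))^2)
        = 3*ε*(deq:ℝ)/32 + (deq:ℝ)*ε^2/192 := by field_simp; ring
    have hd2 : (D:ℝ) ≤ 2*(deq:ℝ) := by linarith
    linarith [h4a, h4b, mul_le_mul_of_nonneg_right hd2 (sq_nonneg ε)]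
  calc Pr _ ≤ Pr ((S1 ∪ S2) ∪ (S3 ∪ S4)) := measure_mono hsub
    _ ≤ Pr (S1 ∪ S2) + Pr (S3 ∪ S4) := measure_union_le _ _
    _ ≤ (Pr S1 + Pr S2) + (Pr S3 + Pr S4) :=
        add_le_add (measure_union_le _ _) (measure_union_le _ _)
    _ ≤ (ENNReal.ofReal (Real.exp (-((D : ℝ) * ε^2) / 384)) + ENNReal.ofReal (Real.exp (-((D : ℝ) * ε^2) / 384))) + (ENNReal.ofReal (Real.exp (-((D : ℝ) * ε^2) / 384)) + ENNReal.ofReal (Real.exp (-((D : ℝ) * ε^2) / 384))) :=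
        add_le_add (add_le_add hb1 hb2) (add_le_add hb3 hb4)
    _ = ENNReal.ofReal (4 * Real.exp (-((D : ℝ) * ε^2) / 384)) := by
        rw [← ENNReal.ofReal_add he0 he0, ← ENNReal.ofReal_add (by linarith) (by linarith)]
        congr 1; ring
end

section
/- Let H be a self-adjoint operator on a finite-dimensional complex inner product space, let P be an orthogonal projection, let E ∈ ℝ, let φ₁ be a unit vector with H φ₁ = E φ₁, and let φ₀ be a unit vector with ⟨φ₀, P φ₀⟩ = 0. Then for every t ∈ ℝ, ⟨e^{−iHt} φ₀, P e^{−iHt} φ₀⟩ ≤ 4·‖φ₀ − φ₁‖; in particular, if φ₀ is close to an eigenvector of H that is orthogonal to the range of P, then the evolved state e^{−iHt}φ₀ stays nearly orthogonal to the range of P uniformly in t and never approaches thermal equilibrium. -/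
open Filter Complex
open scoped InnerProductSpace

section Aux

variable {V : Type*} [NormedAddCommGroup V] [InnerProductSpace ℂ V] [FiniteDimensional ℂ V]

/-- exp of an operator applied to an eigenvector. -/
lemma aux_exp_apply_eig (A : V →L[ℂ] V) (c : ℂ) (φ : V) (h : A φ = c • φ) :
    NormedSpace.exp A φ = Complex.exp c • φ := by
  have hpow : ∀ n : ℕ, (A ^ n) φ = c ^ n • φ := by
    intro n
    induction n with
    | zero => simp
    | succ n ih =>
        rw [pow_succ, ContinuousLinearMap.mul_apply, h, map_smul, ih, smul_smul, ← pow_succ']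
  have hs : Summable fun n : ℕ => ((n.factorial : ℂ))⁻¹ • A ^ n :=
    NormedSpace.expSeries_summable' (𝕂 := ℂ) A
  have hsc : Summable fun n : ℕ => ((n.factorial : ℂ))⁻¹ * c ^ n := by
    simpa [smul_eq_mul] using NormedSpace.expSeries_summable' (𝕂 := ℂ) c
  have happ := (ContinuousLinearMap.apply ℂ V φ).map_tsum hs
  rw [NormedSpace.exp_eq_tsum ℂ]
  calc (∑' n : ℕ, ((n.factorial : ℂ))⁻¹ • A ^ n) φ
      = ∑' n : ℕ, (((n.factorial : ℂ))⁻¹ • A ^ n) φ := happ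
    _ = ∑' n : ℕ, (((n.factorial : ℂ))⁻¹ * c ^ n) • φ := by
        refine tsum_congr fun n => ?_
        rw [ContinuousLinearMap.smul_apply, hpow, smul_smul]
    _ = (∑' n : ℕ, ((n.factorial : ℂ))⁻¹ * c ^ n) • φ := hsc.tsum_smul_const φ
    _ = Complex.exp c • φ := by
        rw [Complex.exp_eq_exp_ℂ, NormedSpace.exp_eq_tsum ℂ]
        simp [smul_eq_mul]

/-- exp of a skew-adjoint operator is an isometry. -/
lemma aux_exp_skew_isometry (A : V →L[ℂ] V) (hA : star A = -A) (x : V) :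
    ‖NormedSpace.exp A x‖ = ‖x‖ := by
  set U := NormedSpace.exp A with hU
  have hstar : star U * U = 1 := by
    rw [hU, NormedSpace.star_exp, hA, ← NormedSpace.exp_add_of_commute_of_mem_ball (𝕂 := ℂ) ((Commute.refl A).neg_left)
        ((NormedSpace.expSeries_radius_eq_top ℂ (V →L[ℂ] V)).symm ▸ edist_lt_top _ _)
        ((NormedSpace.expSeries_radius_eq_top ℂ (V →L[ℂ] V)).symm ▸ edist_lt_top _ _),
      neg_add_cancel, NormedSpace.exp_zero]
  have hadj : ContinuousLinearMap.adjoint U (U x) = x := by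
    have := congrArg (fun T : V →L[ℂ] V => T x) hstar
    simpa [ContinuousLinearMap.mul_apply, ContinuousLinearMap.star_eq_adjoint] using this
  have hinner : ⟪U x, U x⟫_ℂ = ⟪x, x⟫_ℂ := by
    have := ContinuousLinearMap.adjoint_inner_left U x (U x)
    rw [hadj] at this
    exact this.symm
  rw [norm_eq_sqrt_re_inner (𝕜 := ℂ) (U x), norm_eq_sqrt_re_inner (𝕜 := ℂ) x, hinner]

end Aux

/-- let `H` be self-adjoint, `P` an orthogonal projection, `φ₁` a unit
eigenvector of `H` (`Hφ₁ = Eφ₁`) and `φ₀` a unit vector with `⟨φ₀, Pφ₀⟩ = 0`. Then for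
every `t`, `⟨e^{−iHt}φ₀, P e^{−iHt}φ₀⟩ ≤ 4‖φ₀ − φ₁‖`: the evolved state stays nearly
orthogonal to the range of `P` uniformly in `t`. -/
theorem stmt15 {V : Type*} [NormedAddCommGroup V] [InnerProductSpace ℂ V]
    [FiniteDimensional ℂ V]
    (H P : V →L[ℂ] V) (hH : IsSelfAdjoint H)
    (hP : IsSelfAdjoint P) (hP2 : P ∘L P = P)
    (E : ℝ) (φ₁ : V) (hφ₁ : ‖φ₁‖ = 1) (heig : H φ₁ = (E : ℂ) • φ₁)
    (φ₀ : V) (hφ₀ : ‖φ₀‖ = 1) (horth : ⟪φ₀, P φ₀⟫_ℂ = 0) :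
    ∀ t : ℝ,
      (⟪NormedSpace.exp ((-(Complex.I * t)) • H) φ₀,
        P (NormedSpace.exp ((-(Complex.I * t)) • H) φ₀)⟫_ℂ).re ≤ 4 * ‖φ₀ - φ₁‖ := by
  intro t
  have hPadj : ContinuousLinearMap.adjoint P = P :=
    ContinuousLinearMap.isSelfAdjoint_iff'.mp hP
  have hPP : ∀ x : V, P (P x) = P x := fun x =>
    congrArg (fun T : V →L[ℂ] V => T x) hP2
  -- inner products with P
  have hinnerP : ∀ x : V, ⟪x, P x⟫_ℂ = ⟪P x, P x⟫_ℂ := by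
    intro x
    have := ContinuousLinearMap.adjoint_inner_left P (P x) x
    rw [hPadj, hPP] at this
    exact this.symm
  -- P kills φ₀
  have hPφ₀ : P φ₀ = 0 := by
    have : ⟪P φ₀, P φ₀⟫_ℂ = 0 := by rw [← hinnerP, horth]
    exact inner_self_eq_zero.mp this
  -- P is a contraction
  have hPcontr : ∀ x : V, ‖P x‖ ≤ ‖x‖ := by
    intro x
    have h1 : ‖P x‖ ^ 2 = (⟪x, P x⟫_ℂ).re := by
      rw [hinnerP]
      exact (inner_self_eq_norm_sq (𝕜 := ℂ) (P x)).symm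
    have h2 : (⟪x, P x⟫_ℂ).re ≤ ‖x‖ * ‖P x‖ := by
      calc (⟪x, P x⟫_ℂ).re ≤ ‖⟪x, P x⟫_ℂ‖ := Complex.re_le_norm _
        _ ≤ ‖x‖ * ‖P x‖ := norm_inner_le_norm x (P x)
    rcases eq_or_lt_of_le (norm_nonneg (P x)) with h0 | h0
    · rw [← h0]; exact norm_nonneg x
    · nlinarith [h1, h2]
  -- the evolution is an isometry
  set A : V →L[ℂ] V := (-(Complex.I * t)) • H with hA
  have hAskew : star A = -A := by
    rw [hA, star_smul, hH.star_eq, ← neg_smul]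
    congr 1
    simp [Complex.star_def, Complex.conj_I]
  set U := NormedSpace.exp A with hUdef
  have hIso : ∀ x : V, ‖U x‖ = ‖x‖ := fun x => aux_exp_skew_isometry A hAskew x
  -- U φ₁ is a phase times φ₁
  have hAφ₁ : A φ₁ = (-(Complex.I * t) * E) • φ₁ := by
    rw [hA, ContinuousLinearMap.smul_apply, heig, smul_smul]
  have hUφ₁ : U φ₁ = Complex.exp (-(Complex.I * t) * E) • φ₁ :=
    aux_exp_apply_eig A _ φ₁ hAφ₁
  have hphase : ‖Complex.exp (-(Complex.I * t) * E)‖ = 1 := by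
    rw [Complex.norm_exp]
    simp
  set ψ := U φ₀ with hψ
  set d := φ₀ - φ₁ with hd
  -- bound ‖P ψ‖
  have hsplit : ψ = U d + U φ₁ := by
    rw [hψ, hd, map_sub]; abel
  have hb1 : ‖P (U d)‖ ≤ ‖d‖ := le_of_le_of_eq (hPcontr _) (hIso d)
  have hb2 : ‖P (U φ₁)‖ ≤ ‖d‖ := by
    rw [hUφ₁, map_smul, norm_smul, hphase, one_mul]
    have : P φ₁ = -(P d) := by
      rw [hd, map_sub, hPφ₀, zero_sub, neg_neg]
    rw [this, norm_neg]
    exact hPcontr d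
  have hbound : ‖P ψ‖ ≤ 2 * ‖d‖ := by
    calc ‖P ψ‖ = ‖P (U d) + P (U φ₁)‖ := by rw [hsplit, map_add]
      _ ≤ ‖P (U d)‖ + ‖P (U φ₁)‖ := norm_add_le _ _
      _ ≤ ‖d‖ + ‖d‖ := add_le_add hb1 hb2
      _ = 2 * ‖d‖ := by ring
  have hone : ‖P ψ‖ ≤ 1 := by
    calc ‖P ψ‖ ≤ ‖ψ‖ := hPcontr ψ
      _ = ‖φ₀‖ := hIso φ₀
      _ = 1 := hφ₀
  have hre : (⟪ψ, P ψ⟫_ℂ).re = ‖P ψ‖ ^ 2 := by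
    rw [hinnerP]
    exact inner_self_eq_norm_sq (𝕜 := ℂ) (P ψ)
  have : (⟪ψ, P ψ⟫_ℂ).re ≤ 4 * ‖d‖ := by
    rw [hre]
    nlinarith [norm_nonneg (P ψ), norm_nonneg d]
  simpa [hψ, hUdef, hA, hd] using this
end
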